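/- For each i ∈ {H, L}, the equation p = (1 + exp(a_i − b_i·p))/(b_i + c_i) in the real variable p has exactly one real solution p̂_i; this solution is positive, and every stationary Nash equilibrium p** satisfies p_i** < p̂_i. -/

import Mathlib

open Real Filter

/-- Deterministic utility u_i(p_i, r_i) = a_i - b_i * p_i + c_i * (r_i - p_i). -/
noncomputable def util (a b c pi ri : ℝ) : ℝ := a - b * pi + c * (ri - pi)

/-- MNL demand of product H. -/
noncomputable def demH (aH aL bH bL cH cL : ℝ) (p r : ℝ × ℝ) : ℝ :=
  Real.exp (util aH bH cH p.1 r.1) /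
    (1 + Real.exp (util aH bH cH p.1 r.1) + Real.exp (util aL bL cL p.2 r.2))

/-- MNL demand of product L. -/
noncomputable def demL (aH aL bH bL cH cL : ℝ) (p r : ℝ × ℝ) : ℝ :=
  Real.exp (util aL bL cL p.2 r.2) /
    (1 + Real.exp (util aH bH cH p.1 r.1) + Real.exp (util aL bL cL p.2 r.2))

/-- Scaled derivative of the log-revenue of firm H. -/
noncomputable def GrH (aH aL bH bL cH cL : ℝ) (p r : ℝ × ℝ) : ℝ :=
  1 / ((bH + cH) * p.1) + demH aH aL bH bL cH cL p r - 1

/-- Scaled derivative of the log-revenue of firm L. -/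
noncomputable def GrL (aH aL bH bL cH cL : ℝ) (p r : ℝ × ℝ) : ℝ :=
  1 / ((bL + cL) * p.2) + demL aH aL bH bL cH cL p r - 1

/-- Stationary Nash equilibrium: positive price vector on which both scaled
derivatives vanish at price = reference price. -/
def IsSNE (aH aL bH bL cH cL : ℝ) (p : ℝ × ℝ) : Prop :=
  0 < p.1 ∧ 0 < p.2 ∧ GrH aH aL bH bL cH cL p p = 0 ∧ GrL aH aL bH bL cH cL p p = 0

/-- Projection onto the interval [lo, hi]. -/
noncomputable def proj (lo hi x : ℝ) : ℝ := min (max x lo) hi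

/-- Membership of a price vector in P² = [lo, hi]². -/
def InP2 (lo hi : ℝ) (x : ℝ × ℝ) : Prop := x.1 ∈ Set.Icc lo hi ∧ x.2 ∈ Set.Icc lo hi

/-- Squared Euclidean norm on ℝ². -/
noncomputable def norm2sq (x : ℝ × ℝ) : ℝ := x.1 ^ 2 + x.2 ^ 2

/-- The OPGA dynamics for price path `pp` and reference-price path `rr`. -/
def OPGA (aH aL bH bL cH cL lo hi alpha : ℝ) (eta : ℕ → ℝ) (pp rr : ℕ → ℝ × ℝ) : Prop :=
  (∀ t, (pp (t+1)).1 =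
      proj lo hi ((pp t).1 + eta t * (bH + cH) * GrH aH aL bH bL cH cL (pp t) (rr t))) ∧
  (∀ t, (pp (t+1)).2 =
      proj lo hi ((pp t).2 + eta t * (bL + cL) * GrL aH aL bH bL cH cL (pp t) (rr t))) ∧
  (∀ t, (rr (t+1)).1 = alpha * (rr t).1 + (1 - alpha) * (pp t).1) ∧
  (∀ t, (rr (t+1)).2 = alpha * (rr t).2 + (1 - alpha) * (pp t).2)

/-- The weighted ℓ¹ distance to the SNE. -/
noncomputable def wdist (bH bL cH cL : ℝ) (pstar p : ℝ × ℝ) : ℝ :=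
  |pstar.1 - p.1| / (bH + cH) + |pstar.2 - p.2| / (bL + cL)

/-- The function 𝒢(p) = sign(p_H** − p_H)·G_H(p,p) + sign(p_L** − p_L)·G_L(p,p). -/
noncomputable def calG (aH aL bH bL cH cL : ℝ) (pstar p : ℝ × ℝ) : ℝ :=
  Real.sign (pstar.1 - p.1) * GrH aH aL bH bL cH cL p p +
  Real.sign (pstar.2 - p.2) * GrL aH aL bH bL cH cL p p

/-- The function ℋ(p) used in the local analysis around the SNE. -/
noncomputable def calH (aH aL bH bL cH cL : ℝ) (pstar p : ℝ × ℝ) : ℝ :=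
  (bH + cH) * GrH aH aL bH bL cH cL p p * (pstar.1 - p.1) +
  (bL + cL) * GrL aH aL bH bL cH cL p p * (pstar.2 - p.2)

/-- The constant M_G bounding |G_i| on P². -/
noncomputable def MG (bH bL cH cL lo : ℝ) : ℝ :=
  max (1 / ((bH + cH) * lo)) (1 / ((bL + cL) * lo)) + 1

/-- The Lipschitz constant l_r = (1/4)·√(c_H² + c_L²). -/
noncomputable def lr (cH cL : ℝ) : ℝ := (1 / 4) * Real.sqrt (cH ^ 2 + cL ^ 2)


lemma key_aux (a b c : ℝ) (hb : 0 < b) (hc : 0 < c) :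
    (∃! p : ℝ, p = (1 + Real.exp (a - b * p)) / (b + c)) ∧
    (∀ p : ℝ, p = (1 + Real.exp (a - b * p)) / (b + c) →
      0 < p ∧ ∀ q : ℝ, (b + c) * q < 1 + Real.exp (a - b * q) → q < p) := by
  have hbc : 0 < b + c := by linarith
  set f : ℝ → ℝ := fun x => (b + c) * x - 1 - Real.exp (a - b * x) with hf
  have hmono : StrictMono f := by
    intro x y hxy
    have h1 : Real.exp (a - b * y) < Real.exp (a - b * x) :=
      Real.exp_lt_exp.mpr (by nlinarith)
    simp only [hf]
    nlinarith
  have hiff : ∀ p : ℝ, p = (1 + Real.exp (a - b * p)) / (b + c) ↔ f p = 0 := by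
    intro p
    rw [eq_div_iff hbc.ne']
    simp only [hf]
    constructor <;> intro h <;> nlinarith
  have hcont : Continuous f := by
    simp only [hf]; continuity
  have hf0 : f 0 < 0 := by
    simp only [hf]; have := Real.exp_pos (a - b * 0); nlinarith
  set M : ℝ := (2 + Real.exp a) / (b + c) with hM
  have hM0 : 0 < M := by positivity
  have hfM : 0 < f M := by
    have hMe : (b + c) * M = 2 + Real.exp a := by rw [hM]; field_simp [hbc.ne']
    have : Real.exp (a - b * M) ≤ Real.exp a :=
      Real.exp_le_exp.mpr (by nlinarith)
    simp only [hf]; nlinarith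
  have hex : ∃ x ∈ Set.Icc (0:ℝ) M, f x = 0 := by
    have := intermediate_value_Icc hM0.le hcont.continuousOn
    have h0 : (0:ℝ) ∈ Set.Icc (f 0) (f M) := ⟨hf0.le, hfM.le⟩
    obtain ⟨x, hx, hfx⟩ := this h0
    exact ⟨x, hx, hfx⟩
  obtain ⟨x, hxmem, hfx⟩ := hex
  constructor
  · refine ⟨x, (hiff x).mpr hfx, ?_⟩
    intro y hy
    exact hmono.injective (((hiff y).mp hy).trans hfx.symm)
  · intro p hp
    have hfp : f p = 0 := (hiff p).mp hp
    constructor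
    · by_contra h
      have : f p ≤ f 0 := by
        rcases eq_or_lt_of_le (not_lt.mp h) with h' | h'
        · rw [h']
        · exact (hmono h').le
      linarith
    · intro q hq
      have : f q < 0 := by simp only [hf]; linarith
      by_contra h
      have : f p ≤ f q := by
        rcases eq_or_lt_of_le (not_lt.mp h) with h' | h'
        · rw [h']
        · exact (hmono h').le
      linarith

lemma util_self_aux (a b c p : ℝ) : util a b c p p = a - b * p := by simp [util]

lemma sne_ineqs_aux (aH aL bH bL cH cL : ℝ)
    (hbH : 0 < bH) (hbL : 0 < bL) (hcH : 0 < cH) (hcL : 0 < cL)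
    (pstar : ℝ × ℝ) (h : IsSNE aH aL bH bL cH cL pstar) :
    (bH + cH) * pstar.1 < 1 + Real.exp (aH - bH * pstar.1) ∧
    (bL + cL) * pstar.2 < 1 + Real.exp (aL - bL * pstar.2) := by
  obtain ⟨h1, h2, hH, hL⟩ := h
  set e1 := Real.exp (aH - bH * pstar.1) with he1
  set e2 := Real.exp (aL - bL * pstar.2) with he2
  have he1p : 0 < e1 := Real.exp_pos _
  have he2p : 0 < e2 := Real.exp_pos _
  have hS : 0 < 1 + e1 + e2 := by linarith
  have hA : 0 < (bH + cH) * pstar.1 := by positivity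
  have hB : 0 < (bL + cL) * pstar.2 := by positivity
  rw [GrH, demH, util_self_aux, util_self_aux, ← he1, ← he2] at hH
  rw [GrL, demL, util_self_aux, util_self_aux, ← he1, ← he2] at hL
  constructor
  · have := hH
    field_simp at this
    nlinarith [this, mul_pos he1p he2p]
  · have := hL
    field_simp at this
    nlinarith [this, mul_pos he1p he2p]

theorem SNE_upper_bound (aH aL bH bL cH cL : ℝ)
    (hbH : 0 < bH) (hbL : 0 < bL) (hcH : 0 < cH) (hcL : 0 < cL) :
    (∃! ph : ℝ, ph = (1 + Real.exp (aH - bH * ph)) / (bH + cH)) ∧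
    (∀ ph : ℝ, ph = (1 + Real.exp (aH - bH * ph)) / (bH + cH) →
      0 < ph ∧ ∀ pstar : ℝ × ℝ, IsSNE aH aL bH bL cH cL pstar → pstar.1 < ph) ∧
    (∃! pl : ℝ, pl = (1 + Real.exp (aL - bL * pl)) / (bL + cL)) ∧
    (∀ pl : ℝ, pl = (1 + Real.exp (aL - bL * pl)) / (bL + cL) →
      0 < pl ∧ ∀ pstar : ℝ × ℝ, IsSNE aH aL bH bL cH cL pstar → pstar.2 < pl) := by
  obtain ⟨hexH, hspecH⟩ := key_aux aH bH cH hbH hcH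
  obtain ⟨hexL, hspecL⟩ := key_aux aL bL cL hbL hcL
  refine ⟨hexH, ?_, hexL, ?_⟩
  · intro ph hph
    obtain ⟨hpos, hub⟩ := hspecH ph hph
    exact ⟨hpos, fun pstar hsne =>
      hub pstar.1 (sne_ineqs_aux aH aL bH bL cH cL hbH hbL hcH hcL pstar hsne).1⟩
  · intro pl hpl
    obtain ⟨hpos, hub⟩ := hspecL pl hpl
    exact ⟨hpos, fun pstar hsne =>
      hub pstar.2 (sne_ineqs_aux aH aL bH bL cH cL hbH hbL hcH hcL pstar hsne).2⟩
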